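/- If P₁, P₂, P₃ are linearly independent polynomials, then the determinant of the 3×3 matrix with rows (Pᵢ'', Pᵢ', Pᵢ) is a nonzero polynomial. -/

import Mathlib

open Polynomial

/-- Cast of `descFactorial d 2` to the reals. -/
private lemma descFactorial_two_cast (d : ℕ) :
    ((d.descFactorial 2 : ℕ) : ℝ) = (d : ℝ) * ((d : ℝ) - 1) := by
  cases d with
  | zero => simp
  | succ n =>
      simp [Nat.descFactorial]
      ring

/-- Coefficient of a triple product at the sum of degree bounds. -/
private lemma coeff_mul3 {p q r : Polynomial ℝ} {a b c : ℕ}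
    (hp : p.natDegree ≤ a) (hq : q.natDegree ≤ b) (hr : r.natDegree ≤ c) :
    (p * q * r).coeff (a + b + c) = p.coeff a * q.coeff b * r.coeff c := by
  rw [coeff_mul_add_eq_of_natDegree_le (natDegree_mul_le.trans (add_le_add hp hq)) hr,
    coeff_mul_add_eq_of_natDegree_le hp hq]

/-- The key per-term coefficient computation. -/
private lemma term_coeff (p q r : Polynomial ℝ) (kp kq kr N : ℕ)
    (hN : N + 3 = p.natDegree + q.natDegree + r.natDegree) (hk : kp + kq + kr = 3) :
    (derivative^[kp] p * derivative^[kq] q * derivative^[kr] r).coeff N =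
      ((p.natDegree.descFactorial kp : ℕ) : ℝ) * ((q.natDegree.descFactorial kq : ℕ) : ℝ) *
        ((r.natDegree.descFactorial kr : ℕ) : ℝ) *
        (p.leadingCoeff * q.leadingCoeff * r.leadingCoeff) := by
  by_cases hp : p.natDegree < kp
  · rw [iterate_derivative_eq_zero hp, Nat.descFactorial_eq_zero_iff_lt.mpr hp]
    simp
  by_cases hq : q.natDegree < kq
  · rw [iterate_derivative_eq_zero hq, Nat.descFactorial_eq_zero_iff_lt.mpr hq]
    simp
  by_cases hr : r.natDegree < kr
  · rw [iterate_derivative_eq_zero hr, Nat.descFactorial_eq_zero_iff_lt.mpr hr]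
    simp
  push_neg at hp hq hr
  have hsplit : N = (p.natDegree - kp) + (q.natDegree - kq) + (r.natDegree - kr) := by omega
  rw [hsplit, coeff_mul3 ((natDegree_iterate_derivative p kp))
      ((natDegree_iterate_derivative q kq)) ((natDegree_iterate_derivative r kr)),
    coeff_iterate_derivative, coeff_iterate_derivative, coeff_iterate_derivative,
    Nat.sub_add_cancel hp, Nat.sub_add_cancel hq, Nat.sub_add_cancel hr]
  simp only [coeff_natDegree, nsmul_eq_mul]
  ring

/-- If the three polynomials are nonzero with pairwise distinct degrees, the Wronskian-type
determinant is nonzero. -/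
private lemma wronskian_ne_zero_of_distinct (P : Fin 3 → Polynomial ℝ)
    (h0 : ∀ i, P i ≠ 0)
    (hd : ∀ i j, i ≠ j → (P i).natDegree ≠ (P j).natDegree) :
    Matrix.det (Matrix.of fun i : Fin 3 =>
      ![derivative (derivative (P i)), derivative (P i), P i]) ≠ 0 := by
  have h01 := hd 0 1 (by decide)
  have h02 := hd 0 2 (by decide)
  have h12 := hd 1 2 (by decide)
  set d0 := (P 0).natDegree with hd0
  set d1 := (P 1).natDegree with hd1
  set d2 := (P 2).natDegree with hd2
  have hsum : 3 ≤ d0 + d1 + d2 := by omega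
  set N := d0 + d1 + d2 - 3 with hNdef
  have hN : N + 3 = d0 + d1 + d2 := by omega
  intro hdet
  have hco : (Matrix.det (Matrix.of fun i : Fin 3 =>
      ![derivative (derivative (P i)), derivative (P i), P i])).coeff N = 0 := by
    rw [hdet]; simp
  rw [Matrix.det_fin_three] at hco
  simp only [Matrix.of_apply, Matrix.cons_val', Matrix.cons_val_zero, Matrix.cons_val_one,
    Matrix.head_cons, Matrix.cons_val_two, Matrix.tail_cons, Matrix.empty_val',
    Matrix.cons_val_fin_one, Matrix.head_fin_const] at hco
  have e2 : ∀ x : Polynomial ℝ, derivative (derivative x) = derivative^[2] x := fun x => rfl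
  have e1 : ∀ x : Polynomial ℝ, derivative x = derivative^[1] x := fun x => rfl
  have e0 : ∀ x : Polynomial ℝ, x = derivative^[0] x := fun x => rfl
  simp only [coeff_sub, coeff_add] at hco
  rw [show derivative (derivative (P 0)) * derivative (P 1) * P 2
        = derivative^[2] (P 0) * derivative^[1] (P 1) * derivative^[0] (P 2) from rfl,
      show derivative (derivative (P 0)) * P 1 * derivative (P 2)
        = derivative^[2] (P 0) * derivative^[0] (P 1) * derivative^[1] (P 2) from rfl,
      show derivative (P 0) * derivative (derivative (P 1)) * P 2
        = derivative^[1] (P 0) * derivative^[2] (P 1) * derivative^[0] (P 2) from rfl,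
      show derivative (P 0) * P 1 * derivative (derivative (P 2))
        = derivative^[1] (P 0) * derivative^[0] (P 1) * derivative^[2] (P 2) from rfl,
      show P 0 * derivative (derivative (P 1)) * derivative (P 2)
        = derivative^[0] (P 0) * derivative^[2] (P 1) * derivative^[1] (P 2) from rfl,
      show P 0 * derivative (P 1) * derivative (derivative (P 2))
        = derivative^[0] (P 0) * derivative^[1] (P 1) * derivative^[2] (P 2) from rfl] at hco
  rw [term_coeff _ _ _ 2 1 0 N (by omega) (by norm_num),
      term_coeff _ _ _ 2 0 1 N (by omega) (by norm_num),
      term_coeff _ _ _ 1 2 0 N (by omega) (by norm_num),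
      term_coeff _ _ _ 1 0 2 N (by omega) (by norm_num),
      term_coeff _ _ _ 0 2 1 N (by omega) (by norm_num),
      term_coeff _ _ _ 0 1 2 N (by omega) (by norm_num)] at hco
  simp only [descFactorial_two_cast, Nat.descFactorial_one, Nat.descFactorial_zero,
    Nat.cast_one] at hco
  set a : ℝ := (d0 : ℝ) with ha
  set b : ℝ := (d1 : ℝ) with hb
  set c : ℝ := (d2 : ℝ) with hc
  set L : ℝ := (P 0).leadingCoeff * (P 1).leadingCoeff * (P 2).leadingCoeff with hL
  have hfact : a * (a - 1) * b * 1 * L - a * (a - 1) * 1 * c * L - b * (b - 1) * a * 1 * L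
      + 1 * (c * (c - 1)) * a * L + b * (b - 1) * 1 * c * L - 1 * (c * (c - 1)) * b * L
      = ((a - b) * (b - c) * (a - c)) * L := by ring
  have hco' : ((a - b) * (b - c) * (a - c)) * L = 0 := by
    rw [← hfact]
    convert hco using 2 <;> ring
  have hab : a - b ≠ 0 := sub_ne_zero.mpr (by rw [ha, hb]; exact_mod_cast h01)
  have hbc : b - c ≠ 0 := sub_ne_zero.mpr (by rw [hb, hc]; exact_mod_cast h12)
  have hac : a - c ≠ 0 := sub_ne_zero.mpr (by rw [ha, hc]; exact_mod_cast h02)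
  have hLne : L ≠ 0 :=
    mul_ne_zero (mul_ne_zero (leadingCoeff_ne_zero.mpr (h0 0)) (leadingCoeff_ne_zero.mpr (h0 1)))
      (leadingCoeff_ne_zero.mpr (h0 2))
  exact (mul_ne_zero (mul_ne_zero (mul_ne_zero hab hbc) hac) hLne) hco'

/-- Row operation preserves linear independence. -/
private lemma li_update (P : Fin 3 → Polynomial ℝ) (hli : LinearIndependent ℝ P)
    (i j : Fin 3) (hij : i ≠ j) (c : ℝ) :
    LinearIndependent ℝ (Function.update P j (P j - c • P i)) := by
  classical
  rw [Fintype.linearIndependent_iff] at hli ⊢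
  intro g hg
  have key : ∑ k, (g k - (if k = i then g j * c else 0)) • P k = 0 := by
    rw [← hg]
    rw [Finset.sum_congr rfl (g := fun k => (g k - if k = i then g j * c else 0) • P k)
      (fun k _ => rfl)]
    have expand : ∀ k : Fin 3, g k • Function.update P j (P j - c • P i) k
        = g k • P k - (if k = j then (g j * c) • P i else 0) := by
      intro k
      by_cases hk : k = j
      · subst hk
        simp [Function.update_self, smul_sub, smul_smul, mul_comm]
      · simp [Function.update_of_ne hk, hk]
    simp only [expand]
    rw [Finset.sum_sub_distrib]
    have : ∀ k : Fin 3, (g k - if k = i then g j * c else 0) • P k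
        = g k • P k - (if k = i then (g j * c) • P i else 0) := by
      intro k
      by_cases hk : k = i
      · subst hk; rw [sub_smul]; simp
      · simp [hk]
    simp only [this]
    rw [Finset.sum_sub_distrib]
    congr 1
    rw [Finset.sum_ite_eq' Finset.univ j, Finset.sum_ite_eq' Finset.univ i]
    simp
  have hall := hli _ key
  have hgj : g j = 0 := by
    have := hall j
    rwa [if_neg (Ne.symm hij), sub_zero] at this
  intro k
  by_cases hk : k = i
  · have := hall k
    rwa [if_pos hk, hgj, zero_mul, sub_zero] at this
  · have := hall k
    rwa [if_neg hk, sub_zero] at this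

private lemma sum3_lt {f g : Fin 3 → ℕ} (j : Fin 3) (hle : ∀ k, k ≠ j → f k = g k)
    (hlt : f j < g j) : f 0 + f 1 + f 2 < g 0 + g 1 + g 2 := by
  fin_cases j
  · have h1 := hle 1 (by decide); have h2 := hle 2 (by decide)
    have h3 : f 0 < g 0 := hlt; omega
  · have h1 := hle 0 (by decide); have h2 := hle 2 (by decide)
    have h3 : f 1 < g 1 := hlt; omega
  · have h1 := hle 0 (by decide); have h2 := hle 1 (by decide)
    have h3 : f 2 < g 2 := hlt; omega

private lemma stmt7_aux : ∀ n : ℕ, ∀ P : Fin 3 → Polynomial ℝ,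
    (P 0).natDegree + (P 1).natDegree + (P 2).natDegree = n →
    LinearIndependent ℝ P →
    Matrix.det (Matrix.of fun i : Fin 3 =>
      ![derivative (derivative (P i)), derivative (P i), P i]) ≠ 0 := by
  intro n
  induction n using Nat.strong_induction_on with
  | _ n ih =>
    intro P hn hli
    have h0 : ∀ i, P i ≠ 0 := fun i => hli.ne_zero i
    by_cases hdist : ∀ i j : Fin 3, i ≠ j → (P i).natDegree ≠ (P j).natDegree
    · exact wronskian_ne_zero_of_distinct P h0 hdist
    · push_neg at hdist
      obtain ⟨i, j, hij, hdeg⟩ := hdist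
      have hlci : (P i).leadingCoeff ≠ 0 := leadingCoeff_ne_zero.mpr (h0 i)
      have hlcj : (P j).leadingCoeff ≠ 0 := leadingCoeff_ne_zero.mpr (h0 j)
      obtain ⟨r, hr⟩ : ∃ x : ℝ, x = (P j).leadingCoeff / (P i).leadingCoeff := ⟨_, rfl⟩
      have hrne : r ≠ 0 := by rw [hr]; exact div_ne_zero hlcj hlci
      obtain ⟨Q, hQ⟩ : ∃ q : Polynomial ℝ, q = P j - r • P i := ⟨_, rfl⟩
      obtain ⟨P', hP'⟩ : ∃ p : Fin 3 → Polynomial ℝ, p = Function.update P j Q := ⟨_, rfl⟩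
      have hli' : LinearIndependent ℝ P' := by
        rw [hP', hQ]; exact li_update P hli i j hij r
      have hQne : Q ≠ 0 := by
        have := hli'.ne_zero j
        rwa [hP', Function.update_self] at this
      -- degree drops
      have hdegQ : Q.degree < (P j).degree := by
        have h1 : (P j).degree = (r • P i).degree := by
          rw [smul_eq_C_mul, degree_mul, degree_C hrne, zero_add,
            degree_eq_natDegree (h0 j), degree_eq_natDegree (h0 i), hdeg]
        have h2 : (P j).leadingCoeff = (r • P i).leadingCoeff := by
          rw [smul_eq_C_mul, leadingCoeff_mul, leadingCoeff_C, hr,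
            div_mul_cancel₀ _ hlci]
        rw [hQ]
        exact degree_sub_lt h1 (h0 j) h2
      have hndQ : Q.natDegree < (P j).natDegree := natDegree_lt_natDegree hQne hdegQ
      have hsum' : (P' 0).natDegree + (P' 1).natDegree + (P' 2).natDegree < n := by
        rw [← hn]
        exact sum3_lt (f := fun k => (P' k).natDegree) (g := fun k => (P k).natDegree) j
          (fun k hk => by simp only [hP', Function.update_of_ne hk])
          (by simpa only [hP', Function.update_self] using hndQ)
      have hdet' := ih _ hsum' P' rfl hli'
      -- determinants are equal
      have hrow : (Matrix.of fun k : Fin 3 =>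
          ![derivative (derivative (P' k)), derivative (P' k), P' k])
          = Matrix.updateRow (Matrix.of fun k : Fin 3 =>
              ![derivative (derivative (P k)), derivative (P k), P k]) j
            ((Matrix.of fun k : Fin 3 =>
              ![derivative (derivative (P k)), derivative (P k), P k]) j
              + (-(C r)) • (Matrix.of fun k : Fin 3 =>
              ![derivative (derivative (P k)), derivative (P k), P k]) i) := by
        ext k l
        by_cases hk : k = j
        · rw [hk, Matrix.updateRow_self]
          have hQd : derivative Q = derivative (P j) - C r * derivative (P i) := by
            rw [hQ, derivative_sub, smul_eq_C_mul, derivative_C_mul]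
          have hQdd : derivative (derivative Q)
              = derivative (derivative (P j)) - C r * derivative (derivative (P i)) := by
            rw [hQd, derivative_sub, derivative_C_mul]
          have hQ' : Q = P j - C r * P i := by rw [hQ, smul_eq_C_mul]
          simp only [Matrix.of_apply, hP', Function.update_self]
          fin_cases l <;>
            simp [hQ', hQd, hQdd, Pi.add_apply, Pi.smul_apply, smul_eq_mul] <;>
            ring
        · rw [Matrix.updateRow_ne hk]
          simp only [hP', Matrix.of_apply, Function.update_of_ne hk]
      rw [hrow] at hdet'
      rw [Matrix.det_updateRow_add_smul_self _ hij.symm] at hdet'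
      exact hdet'

/-- if `P₁, P₂, P₃` are linearly independent polynomials, then the Wronskian-type
determinant of the matrix with rows `(Pᵢ'', Pᵢ', Pᵢ)` is a nonzero polynomial. -/
theorem stmt7 (P : Fin 3 → Polynomial ℝ) (hli : LinearIndependent ℝ P) :
    Matrix.det (Matrix.of fun i : Fin 3 =>
      ![derivative (derivative (P i)), derivative (P i), P i]) ≠ 0 := by
  exact stmt7_aux _ P rfl hli
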